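/- Let C be an abelian category with countable products that are exact, and let B ⊆ C be a class of objects closed under countable products and direct summands such that every object of C is a quotient of an object F with Ext^n_C(F, B) = 0 for all B ∈ B and n ≥ 1. Assume that every B-periodic object of C belongs to B. Then for any acyclic complex B^• in C with all terms in B, all the objects of cocycles of B^• belong to B. -/

import Mathlib

open CategoryTheory CategoryTheory.Limits

open Pseudoelement

universe w v u

/-- Derivation of "cocycles are cotorsion" from periodicity.  Let `C` be an abelian
category with exact countable products and `𝓑` a class of objects closed under countable
products and direct summands, such that every object of `C` is a quotient of an object `F`
with `Extⁿ(F, B) = 0` for all `B ∈ 𝓑`, `n ≥ 1`.  If every `𝓑`-periodic object belongs to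
`𝓑`, then in any acyclic complex with all terms in `𝓑`, all objects of cocycles belong
to `𝓑`. -/
theorem cocycles_in_class_of_periodicity
    (C : Type u) [Category.{v} C] [Abelian C] [HasCountableProducts C] [HasExt.{w} C]
    -- countable products are exact:
    (hprodexact : ∀ (X Y : ℕ → C) (f : ∀ n, X n ⟶ Y n),
      (∀ n, Epi (f n)) → Epi (CategoryTheory.Limits.Pi.map f))
    (𝓑 : C → Prop)
    -- `𝓑` is closed under countable products:
    (hprod : ∀ X : ℕ → C, (∀ n, 𝓑 (X n)) → 𝓑 (∏ᶜ X))
    -- `𝓑` is closed under direct summands: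
    (hsummand : ∀ (X Y : C) (i : X ⟶ Y) (r : Y ⟶ X), i ≫ r = 𝟙 X → 𝓑 Y → 𝓑 X)
    -- every object is a quotient of an object `F` with `Extⁿ(F, B) = 0` for `B ∈ 𝓑`, `n ≥ 1`:
    (hgen : ∀ X : C, ∃ (F : C) (π : F ⟶ X), Epi π ∧
      ∀ (n : ℕ), 1 ≤ n → ∀ B : C, 𝓑 B → ∀ x : Abelian.Ext F B n, x = 0)
    -- every `𝓑`-periodic object belongs to `𝓑`:
    (hper : ∀ M : C, (∃ (B : C) (f : M ⟶ B) (g : B ⟶ M) (w : f ≫ g = 0),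
      (ShortComplex.mk f g w).ShortExact ∧ 𝓑 B) → 𝓑 M)
    -- an acyclic complex with all terms in `𝓑`:
    (K : CochainComplex C ℤ) (hacyclic : ∀ i : ℤ, K.ExactAt i)
    (hterms : ∀ n : ℤ, 𝓑 (K.X n)) :
    ∀ n : ℤ, 𝓑 (kernel (K.d n (n + 1))) := by
  intro n
  -- the cocycle objects and the canonical maps
  let Z : ℤ → C := fun i => kernel (K.d i (i + 1))
  let f : ∀ i, Z i ⟶ K.X i := fun i => kernel.ι _
  let g : ∀ i, K.X i ⟶ Z (i + 1) := fun i =>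
    kernel.lift _ (K.d i (i + 1)) (K.d_comp_d i (i + 1) (i + 1 + 1))
  have hgι : ∀ i, g i ≫ kernel.ι _ = K.d i (i + 1) := fun i => kernel.lift_ι _ _ _
  have w : ∀ i, f i ≫ g i = 0 := by
    intro i
    rw [← cancel_mono (kernel.ι (K.d (i + 1) (i + 1 + 1)))]
    simp [f, g]
  -- each `g i` is an epimorphism, by acyclicity
  have hepi : ∀ i, Epi (g i) := by
    intro i
    have hex : (K.sc' i (i + 1) (i + 1 + 1)).Exact := by
      rw [← K.exactAt_iff' i (i + 1) (i + 1 + 1) (by simp) (by simp)]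
      exact hacyclic (i + 1)
    apply Abelian.Pseudoelement.epi_of_pseudo_surjective
    intro b
    have hb : (K.sc' i (i + 1) (i + 1 + 1)).g ((kernel.ι (K.d (i + 1) (i + 1 + 1))) b) = 0 := by
      refine (Abelian.Pseudoelement.comp_apply (kernel.ι (K.d (i+1) (i+1+1)))
        (K.d (i+1) (i+1+1)) b).symm.trans ?_
      show ((kernel.ι (K.d (i+1) (i+1+1))) ≫ K.d (i+1) (i+1+1)) b = 0
      rw [kernel.condition]
      exact Abelian.Pseudoelement.zero_apply _ b
    obtain ⟨a, ha⟩ := Abelian.Pseudoelement.pseudo_exact_of_exact hex _ hb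
    refine ⟨a, Abelian.Pseudoelement.pseudo_injective_of_mono (kernel.ι (K.d (i+1) (i+1+1))) ?_⟩
    refine (Abelian.Pseudoelement.comp_apply (g i) (kernel.ι (K.d (i+1) (i+1+1))) a).symm.trans ?_
    rw [hgι i]
    exact ha
  -- reindex: a bijection `ℕ ≃ ℤ`
  let e : ℕ ≃ ℤ := (Denumerable.eqv ℤ).symm
  -- the product of the cocycles, over all degrees
  let M : C := ∏ᶜ (fun k : ℕ => Z (e k))
  let B : C := ∏ᶜ (fun k : ℕ => K.X (e k))
  let F : M ⟶ B := Limits.Pi.map (fun k => f (e k))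
  let G0 : B ⟶ ∏ᶜ (fun k : ℕ => Z (e k + 1)) := Limits.Pi.map (fun k => g (e k))
  -- reindexing isomorphism
  let τ : ℕ ≃ ℕ := e.trans ((Equiv.addRight (1 : ℤ)).trans e.symm)
  have hτ : ∀ k, Z (e (τ k)) = Z (e k + 1) := fun k => by
    rw [show e (τ k) = e k + 1 from by simp [τ, Equiv.addRight]]
  let r : (∏ᶜ (fun k : ℕ => Z (e k + 1))) ≅ M :=
    Pi.whiskerEquiv (f := fun k : ℕ => Z (e k + 1)) (g := fun k : ℕ => Z (e k)) τ
      (fun k => eqToIso (hτ k))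
  let G : B ⟶ M := G0 ≫ r.hom
  have hmapπ : ∀ (X Y : ℕ → C) (p : ∀ k, X k ⟶ Y k) (k : ℕ),
      Limits.Pi.map p ≫ Pi.π Y k = Pi.π X k ≫ p k := fun X Y p k => limMap_π _ _
  have wFG0 : F ≫ G0 = 0 := by
    apply Limits.Pi.hom_ext
    intro k
    rw [zero_comp, Category.assoc, hmapπ, ← Category.assoc, hmapπ, Category.assoc, w (e k),
      comp_zero]
  have wFG : F ≫ G = 0 := by
    rw [show F ≫ G = (F ≫ G0) ≫ r.hom by simp [G], wFG0, zero_comp]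
  -- `F` is a kernel of `G`
  haveI hmonoF : Mono F := by
    haveI : ∀ k : ℕ, Mono (f (e k)) := fun k => by
      dsimp only [f]; infer_instance
    exact Pi.map_mono _
  have hker : IsLimit (KernelFork.ofι F wFG) := by
    refine KernelFork.IsLimit.ofι' F wFG (fun {A} u hu => ?_)
    have hu0 : u ≫ G0 = 0 := by
      have h1 : (u ≫ G0) ≫ r.hom = 0 := by
        rw [Category.assoc]; exact hu
      rwa [← cancel_mono r.hom, zero_comp]
    have hcomp : ∀ k : ℕ, (u ≫ Pi.π _ k) ≫ g (e k) = 0 := by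
      intro k
      have h2 := hu0 =≫ Pi.π _ k
      rwa [zero_comp, Category.assoc, hmapπ, ← Category.assoc] at h2
    have hd : ∀ k : ℕ, (u ≫ Pi.π _ k) ≫ K.d (e k) (e k + 1) = 0 := by
      intro k
      rw [← hgι (e k), ← Category.assoc, hcomp k, zero_comp]
    refine ⟨Pi.lift (fun k => kernel.lift _ (u ≫ Pi.π _ k) (hd k)), ?_⟩
    apply Limits.Pi.hom_ext
    intro k
    rw [Category.assoc, hmapπ, ← Category.assoc, Pi.lift_π]
    exact kernel.lift_ι _ _ _
  -- the product short complex is short exact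
  haveI hepiG : Epi G := by
    haveI : Epi G0 := hprodexact _ _ (fun k => g (e k)) (fun k => hepi (e k))
    exact epi_comp _ _
  have hses : (ShortComplex.mk F G wFG).ShortExact :=
    ShortComplex.ShortExact.mk' ((ShortComplex.mk F G wFG).exact_of_f_is_kernel hker)
      hmonoF hepiG
  -- so `M` is `𝓑`-periodic, hence in `𝓑`
  have hM : 𝓑 M := hper M ⟨B, F, G, wFG, hses, hprod _ (fun k => hterms (e k))⟩
  -- `Z n` is a direct summand of `M`
  let ι0 : Z n ⟶ M := Pi.lift (fun k => if h : e k = n then eqToHom (by rw [h]) else 0)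
  let ρ : M ⟶ Z n := Pi.π _ (e.symm n) ≫ eqToHom (by rw [e.apply_symm_apply])
  have hretr : ι0 ≫ ρ = 𝟙 (Z n) := by
    rw [show ι0 ≫ ρ = (ι0 ≫ Pi.π _ (e.symm n)) ≫ eqToHom (by rw [e.apply_symm_apply]) from by
      simp [ρ], Pi.lift_π, dif_pos (e.apply_symm_apply n), eqToHom_trans, eqToHom_refl]
  exact hsummand (Z n) M ι0 ρ hretr hM
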